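/- Let d ≥ 1 and N ≥ 1. Fix d×d real matrices K̃_1, …, K̃_N, a constant g ≥ 0, and for each ordered pair (i, j) with j in the neighborhood 𝒩(i) of i, fix a scalar c_{ij} ∈ ℝ and d×d real matrices R_{ij} and R'_{ij}. Then the MRFTV energy E(K_1, …, K_N) = Σ_i ‖K_i − K̃_i‖_F² + g·Σ_i Σ_{j ∈ 𝒩(i)} ‖K_i − c_{ij}·R_{ij}·K_j·R'_{ij}‖_F² is strictly convex on (ℝ^{d×d})^N and attains a unique global minimizer. -/

import Mathlib

open Matrix Filter

attribute [local instance] Matrix.normedAddCommGroup Matrix.normedSpace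

/-- Squared Frobenius norm of a real matrix: `‖A‖_F² = Σᵢⱼ (A i j)²`. -/
def frobSq {d : ℕ} (A : Matrix (Fin d) (Fin d) ℝ) : ℝ :=
  ∑ i, ∑ j, (A i j) ^ 2

lemma frobSq_nonneg {d : ℕ} (A : Matrix (Fin d) (Fin d) ℝ) : 0 ≤ frobSq A := by
  apply Finset.sum_nonneg; intros; apply Finset.sum_nonneg; intros; positivity

lemma frobSq_pos {d : ℕ} {A : Matrix (Fin d) (Fin d) ℝ} (h : A ≠ 0) : 0 < frobSq A := by
  obtain ⟨p, q, hpq⟩ : ∃ p q, A p q ≠ 0 := by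
    by_contra hc
    push_neg at hc
    exact h (by ext p q; simp [hc])
  apply Finset.sum_pos' (fun i _ => Finset.sum_nonneg fun j _ => by positivity)
  exact ⟨p, Finset.mem_univ _, Finset.sum_pos' (fun j _ => by positivity)
    ⟨q, Finset.mem_univ _, by positivity⟩⟩

lemma frobSq_continuous {d : ℕ} : Continuous (frobSq (d := d)) := by
  unfold frobSq
  exact continuous_finset_sum _ fun i _ => continuous_finset_sum _ fun j _ =>
    (continuous_id.matrix_elem i j).pow 2

lemma frobSq_combo {d : ℕ} (A B : Matrix (Fin d) (Fin d) ℝ) {a b : ℝ} (hab : a + b = 1) :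
    frobSq (a • A + b • B) = a * frobSq A + b * frobSq B - a * b * frobSq (A - B) := by
  simp only [frobSq, Finset.mul_sum, ← Finset.sum_add_distrib, ← Finset.sum_sub_distrib]
  refine Finset.sum_congr rfl fun p _ => Finset.sum_congr rfl fun q _ => ?_
  have hb : b = 1 - a := by linarith
  subst hb
  simp only [Matrix.add_apply, Matrix.smul_apply, Matrix.sub_apply, smul_eq_mul]
  ring

/-- The MRFTV energy
`E(K) = Σᵢ ‖Kᵢ − K̃ᵢ‖_F² + g Σᵢ Σ_{j ∈ 𝒩(i)} ‖Kᵢ − c_{ij} R_{ij} K_j R'_{ij}‖_F²`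
is strictly convex on `(ℝ^{d×d})^N` and attains a unique global minimizer. -/
theorem mrftv_energy_strictly_convex_unique_min (d N : ℕ) (hd : 1 ≤ d) (hN : 1 ≤ N)
    (Kt : Fin N → Matrix (Fin d) (Fin d) ℝ)
    (g : ℝ) (hg : 0 ≤ g)
    (𝒩 : Fin N → Finset (Fin N))
    (c : Fin N → Fin N → ℝ)
    (R R' : Fin N → Fin N → Matrix (Fin d) (Fin d) ℝ)
    (E : (Fin N → Matrix (Fin d) (Fin d) ℝ) → ℝ)
    (hE : E = fun K =>
      (∑ i, frobSq (K i - Kt i)) +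
        g * ∑ i, ∑ j ∈ 𝒩 i, frobSq (K i - c i j • (R i j * K j * R' i j))) :
    StrictConvexOn ℝ Set.univ E ∧
      ∃! Kstar : Fin N → Matrix (Fin d) (Fin d) ℝ, ∀ K, E Kstar ≤ E K := by
  subst hE
  set X : (Fin N → Matrix (Fin d) (Fin d) ℝ) → Fin N → Fin N → Matrix (Fin d) (Fin d) ℝ :=
    fun K i j => K i - c i j • (R i j * K j * R' i j) with hX
  -- Strict convexity
  have hconv : StrictConvexOn ℝ Set.univ
      (fun K : Fin N → Matrix (Fin d) (Fin d) ℝ =>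
        (∑ i, frobSq (K i - Kt i)) + g * ∑ i, ∑ j ∈ 𝒩 i, frobSq (X K i j)) := by
    refine ⟨convex_univ, ?_⟩
    intro K _ L _ hKL a b ha hb hab
    have h1 : ∀ i, (a • K + b • L) i - Kt i = a • (K i - Kt i) + b • (L i - Kt i) := by
      intro i
      have h := Convex.combo_self hab (Kt i)
      simp only [Pi.add_apply, Pi.smul_apply]
      conv_lhs => rw [← h]
      module
    have h2 : ∀ i j, X (a • K + b • L) i j = a • X K i j + b • X L i j := by
      intro i j
      simp only [hX, Pi.add_apply, Pi.smul_apply, Matrix.mul_add, Matrix.add_mul,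
        Matrix.mul_smul, Matrix.smul_mul]
      module
    have key1 : (∑ i, frobSq ((a • K + b • L) i - Kt i))
        = a * ∑ i, frobSq (K i - Kt i) + b * ∑ i, frobSq (L i - Kt i)
          - a * b * ∑ i, frobSq (K i - L i) := by
      simp only [Finset.mul_sum, ← Finset.sum_add_distrib, ← Finset.sum_sub_distrib]
      refine Finset.sum_congr rfl fun i _ => ?_
      rw [h1 i, frobSq_combo _ _ hab]
      congr 2
      abel
    have key2 : (∑ i, ∑ j ∈ 𝒩 i, frobSq (X (a • K + b • L) i j))
        = a * ∑ i, ∑ j ∈ 𝒩 i, frobSq (X K i j) + b * ∑ i, ∑ j ∈ 𝒩 i, frobSq (X L i j)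
          - a * b * ∑ i, ∑ j ∈ 𝒩 i, frobSq (X K i j - X L i j) := by
      simp only [Finset.mul_sum, ← Finset.sum_add_distrib, ← Finset.sum_sub_distrib]
      refine Finset.sum_congr rfl fun i _ => Finset.sum_congr rfl fun j _ => ?_
      rw [h2 i j, frobSq_combo _ _ hab]
    have hS : 0 < ∑ i, frobSq (K i - L i) := by
      obtain ⟨i, hi⟩ : ∃ i, K i ≠ L i := by
        by_contra hc
        push_neg at hc
        exact hKL (funext hc)
      exact Finset.sum_pos' (fun i _ => frobSq_nonneg _)
        ⟨i, Finset.mem_univ _, frobSq_pos (sub_ne_zero.mpr hi)⟩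
    have hT : 0 ≤ ∑ i, ∑ j ∈ 𝒩 i, frobSq (X K i j - X L i j) :=
      Finset.sum_nonneg fun i _ => Finset.sum_nonneg fun j _ => frobSq_nonneg _
    simp only [smul_eq_mul]
    rw [key1, key2]
    nlinarith [mul_pos (mul_pos ha hb) hS,
      mul_nonneg hg (mul_nonneg (mul_nonneg ha.le hb.le) hT)]
  refine ⟨hconv, ?_⟩
  -- Existence of a minimizer
  have hcont : Continuous (fun K : Fin N → Matrix (Fin d) (Fin d) ℝ =>
      (∑ i, frobSq (K i - Kt i)) + g * ∑ i, ∑ j ∈ 𝒩 i, frobSq (X K i j)) := by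
    apply Continuous.add
    · exact continuous_finset_sum _ fun i _ =>
        frobSq_continuous.comp ((continuous_apply i).sub continuous_const)
    · exact continuous_const.mul <| continuous_finset_sum _ fun i _ =>
        continuous_finset_sum _ fun j _ => frobSq_continuous.comp <|
          (continuous_apply i).sub
            (show Continuous fun K : Fin N → Matrix (Fin d) (Fin d) ℝ =>
                c i j • (R i j * K j * R' i j) from
              (continuous_const_smul (c i j)).comp
                ((continuous_const.matrix_mul (continuous_apply j)).matrix_mul
                continuous_const))
  have lb : ∀ K : Fin N → Matrix (Fin d) (Fin d) ℝ,
      ‖K - Kt‖ ^ 2 ≤ (∑ i, frobSq (K i - Kt i)) + g * ∑ i, ∑ j ∈ 𝒩 i, frobSq (X K i j) := by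
    intro K
    have hS0 : (0:ℝ) ≤ ∑ i, frobSq (K i - Kt i) :=
      Finset.sum_nonneg fun i _ => frobSq_nonneg _
    have h1 : ‖K - Kt‖ ≤ Real.sqrt (∑ i, frobSq (K i - Kt i)) := by
      rw [pi_norm_le_iff_of_nonneg (Real.sqrt_nonneg _)]
      intro i
      rw [Matrix.norm_le_iff (Real.sqrt_nonneg _)]
      intro p q
      have hx : ((K - Kt) i p q) ^ 2 ≤ ∑ i, frobSq (K i - Kt i) := by
        have h2 : ((K - Kt) i p q) ^ 2 ≤ frobSq (K i - Kt i) := by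
          have h3 : (∑ q', ((K i - Kt i) p q') ^ 2) ≤ frobSq (K i - Kt i) :=
            Finset.single_le_sum (f := fun p' => ∑ q', ((K i - Kt i) p' q') ^ 2)
              (fun _ _ => Finset.sum_nonneg fun _ _ => by positivity) (Finset.mem_univ p)
          have h4 : ((K i - Kt i) p q) ^ 2 ≤ ∑ q', ((K i - Kt i) p q') ^ 2 :=
            Finset.single_le_sum (f := fun q' => ((K i - Kt i) p q') ^ 2)
              (fun _ _ => by positivity) (Finset.mem_univ q)
          simpa using h4.trans h3
        exact h2.trans (Finset.single_le_sum (f := fun i => frobSq (K i - Kt i))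
          (fun _ _ => frobSq_nonneg _) (Finset.mem_univ i))
      calc ‖(K - Kt) i p q‖ = Real.sqrt (((K - Kt) i p q) ^ 2) := by
            rw [Real.sqrt_sq_eq_abs]; rfl
        _ ≤ Real.sqrt (∑ i, frobSq (K i - Kt i)) := Real.sqrt_le_sqrt hx
    calc ‖K - Kt‖ ^ 2 ≤ Real.sqrt (∑ i, frobSq (K i - Kt i)) ^ 2 :=
          pow_le_pow_left₀ (norm_nonneg _) h1 2
      _ = ∑ i, frobSq (K i - Kt i) := Real.sq_sqrt hS0
      _ ≤ _ := le_add_of_nonneg_right <| mul_nonneg hg <|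
          Finset.sum_nonneg fun i _ => Finset.sum_nonneg fun j _ => frobSq_nonneg _
  have hcoer : Tendsto (fun K : Fin N → Matrix (Fin d) (Fin d) ℝ =>
      (∑ i, frobSq (K i - Kt i)) + g * ∑ i, ∑ j ∈ 𝒩 i, frobSq (X K i j))
      (cocompact _) atTop := by
    have h1 : Tendsto (⇑(Homeomorph.subRight Kt))
        (cocompact (Fin N → Matrix (Fin d) (Fin d) ℝ)) (cocompact _) :=
      (Homeomorph.subRight Kt).map_cocompact.le
    have h2 : Tendsto (fun K : Fin N → Matrix (Fin d) (Fin d) ℝ => ‖K - Kt‖ ^ 2)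
        (cocompact _) atTop :=
      (tendsto_pow_atTop (two_ne_zero)).comp (tendsto_norm_cocompact_atTop.comp h1)
    exact tendsto_atTop_mono lb h2
  obtain ⟨x, hx⟩ := hcont.exists_forall_le hcoer
  refine ⟨x, hx, fun y hy => ?_⟩
  exact hconv.eq_of_isMinOn (isMinOn_iff.mpr fun z _ => hy z)
    (isMinOn_iff.mpr fun z _ => hx z) (Set.mem_univ _) (Set.mem_univ _)
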